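/- For any integer m ≥ 1 and any prime p not dividing m, Σ_{k=1}^{p-1} (−m)^{p-1-k} B_{k+1} ≡ (−1)^m D_m (mod p). -/

import Mathlib

open Polynomial Finset

/-- Stirling numbers of the second kind. -/
def stirling2 : ℕ → ℕ → ℕ
  | 0, 0 => 1
  | 0, _ + 1 => 0
  | _ + 1, 0 => 0
  | n + 1, k + 1 => (k + 1) * stirling2 n (k + 1) + stirling2 n k

/-- Signed Stirling numbers of the first kind. -/
def stirling1 : ℕ → ℕ → ℤ
  | 0, 0 => 1
  | 0, _ + 1 => 0
  | n + 1, 0 => -(n : ℤ) * stirling1 n 0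
  | n + 1, k + 1 => stirling1 n k - (n : ℤ) * stirling1 n (k + 1)

/-- The Bell polynomial `B_m(x) = ∑_{j=0}^m S(m,j) x^j` over `ℤ`. -/
noncomputable def bellPoly (m : ℕ) : Polynomial ℤ :=
  ∑ j ∈ range (m + 1), (stirling2 m j : ℤ) • X ^ j

/-- The derangement polynomial `D_m(x) = ∑_{j=0}^m C(m,j) j! (x-1)^{m-j}` over `ℤ`. -/
noncomputable def derPoly (m : ℕ) : Polynomial ℤ :=
  ∑ j ∈ range (m + 1), ((m.choose j * j.factorial : ℕ) : ℤ) • (X - 1) ^ (m - j)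

/-- The Bell numbers `B_m = ∑_j S(m,j)`. -/
def bell (m : ℕ) : ℕ := ∑ j ∈ range (m + 1), stirling2 m j

lemma stirling2_eq_zero : ∀ {n j : ℕ}, n < j → stirling2 n j = 0
  | 0, j + 1, _ => rfl
  | n + 1, j + 1, h => by
    have h1 : n < j := Nat.lt_of_succ_lt_succ h
    simp [stirling2, stirling2_eq_zero h1, stirling2_eq_zero (Nat.lt_succ_of_lt h1)]

lemma stirling2_self : ∀ n : ℕ, stirling2 n n = 1
  | 0 => rfl
  | n + 1 => by
    simp [stirling2, stirling2_self n, stirling2_eq_zero (Nat.lt_succ_self n)]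

lemma choose_absorb (j i : ℕ) : (j + 1 - i) * (j+1).choose i = (j+1) * j.choose i := by
  rw [mul_comm, ← Nat.choose_succ_right_eq, Nat.add_one_mul_choose_eq]

lemma factorial_mul_stirling2 (n j : ℕ) :
    (j.factorial : ℤ) * stirling2 n j
      = ∑ i ∈ range (j+1), (-1)^i * (j.choose i : ℤ) * ((j - i : ℕ) : ℤ)^n := by
  induction n generalizing j with
  | zero =>
    simp only [pow_zero, mul_one]
    rw [Int.alternating_sum_range_choose]
    cases j with
    | zero => simp [stirling2]
    | succ j => simp [stirling2]
  | succ n ih =>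
    cases j with
    | zero => simp [stirling2]
    | succ j =>
      have key : ∀ i, ((j + 1 - i : ℕ) : ℤ) * (j+1).choose i = (j+1) * j.choose i := by
        intro i
        exact_mod_cast congrArg (Nat.cast : ℕ → ℤ) (choose_absorb j i)
      have hE : ∑ i ∈ range (j+2), (-1:ℤ)^i * (j+1).choose i * ((j + 1 - i : ℕ) : ℤ)^(n+1)
          = (j+1) * ∑ i ∈ range (j+2), (-1:ℤ)^i * (j.choose i : ℤ) * ((j + 1 - i : ℕ) : ℤ)^n := by
        rw [mul_sum]
        refine sum_congr rfl fun i _ => ?_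
        rw [pow_succ']
        calc (-1:ℤ)^i * (j+1).choose i * (((j + 1 - i : ℕ) : ℤ) * ((j + 1 - i : ℕ) : ℤ)^n)
            = (-1:ℤ)^i * (((j + 1 - i : ℕ) : ℤ) * (j+1).choose i) * ((j + 1 - i : ℕ) : ℤ)^n := by
              ring
          _ = _ := by rw [key i]; ring
      rw [hE]
      have hP : ∀ i, ((j+1).choose (i+1) : ℤ) = j.choose i + j.choose (i+1) := by
        intro i; exact_mod_cast congrArg (Nat.cast : ℕ → ℤ) (Nat.choose_succ_succ j i)
      have hs : stirling2 (n+1) (j+1) = (j + 1) * stirling2 n (j + 1) + stirling2 n j := rfl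
      have hfac : ((j+1).factorial : ℤ) = (j+1) * j.factorial := by
        push_cast [Nat.factorial_succ]; ring
      rw [hs, hfac]
      push_cast
      rw [show ((j:ℤ)+1) * (j.factorial) * ((j + 1 : ℤ) * stirling2 n (j + 1) + stirling2 n j)
          = (j+1) * (((j+1).factorial : ℤ) * stirling2 n (j+1)) + (j+1) * ((j.factorial:ℤ) * stirling2 n j) by
            rw [hfac]; ring]
      rw [ih (j+1), ih j]
      rw [Finset.sum_range_succ' (fun i => (-1:ℤ)^i * (j.choose i : ℤ) * ((j + 1 - i : ℕ) : ℤ)^n) (j+1)]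
      rw [Finset.sum_range_succ' (fun i => (-1:ℤ)^i * ((j+1).choose i : ℤ) * ((j + 1 - i : ℕ) : ℤ)^n) (j+1)]
      simp only [Nat.succ_sub_succ]
      simp only [hP]
      have hsplit : ∀ x, (-1:ℤ)^(x+1) * ((j.choose x : ℤ) + (j.choose (x+1) : ℤ)) * ((j - x : ℕ):ℤ)^n
          = (-1)^(x+1) * (j.choose (x+1) : ℤ) * ((j - x : ℕ):ℤ)^n
            - (-1)^x * (j.choose x : ℤ) * ((j - x : ℕ):ℤ)^n := by
        intro x; rw [pow_succ]; ring
      simp only [hsplit, Finset.sum_sub_distrib, Nat.choose_zero_right]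
      ring

lemma wilson_aux (p : ℕ) [hp : Fact p.Prime] : ∀ u, u ≤ p - 1 →
    ((u.factorial : ZMod p) * ((p - 1 - u).factorial : ZMod p)) = (-1)^(u+1)
  | 0, _ => by simpa using ZMod.wilsons_lemma p
  | u + 1, h => by
    have hp1 : 1 < p := hp.out.one_lt
    have hu : u ≤ p - 1 := Nat.le_of_succ_le h
    have ih := wilson_aux p u hu
    have hsub : p - 1 - u = (p - 1 - (u + 1)) + 1 := by omega
    have hcast : (((p - 1 - (u+1)) + 1 : ℕ) : ZMod p) = -((u : ZMod p) + 1) := by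
      rw [← hsub, show p - 1 - u = p - (u+1) by omega, Nat.cast_sub (by omega)]
      push_cast
      simp [ZMod.natCast_self]
    rw [hsub, Nat.factorial_succ, Nat.cast_mul, hcast] at ih
    rw [Nat.factorial_succ, Nat.cast_mul]
    rw [show ((u+1 : ℕ) : ZMod p) = (u : ZMod p) + 1 by push_cast; ring, pow_succ]
    linear_combination (-1 : ZMod p) * ih

lemma geom_aux (p : ℕ) [hp : Fact p.Prime] (r b : ℕ) (hr0 : r ≠ 0) (hr : r < p) (hb : b < p) :
    ∑ k ∈ Icc 1 (p-1), ((r : ZMod p))^(p-1-k) * (b : ZMod p)^k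
      = if b = r then -1 else 0 := by
  have hp1 : 1 ≤ p := hp.out.one_lt.le
  have hrz : (r : ZMod p) ≠ 0 := by
    rw [Ne, ZMod.natCast_eq_zero_iff]
    intro hdvd
    exact hr0 (Nat.eq_zero_of_dvd_of_lt hdvd hr)
  by_cases hbr : b = r
  · subst hbr
    rw [if_pos rfl]
    have : ∀ k ∈ Icc 1 (p-1), ((b : ZMod p))^(p-1-k) * (b : ZMod p)^k = 1 := by
      intro k hk
      rw [mem_Icc] at hk
      rw [← pow_add, Nat.sub_add_cancel hk.2, ZMod.pow_card_sub_one_eq_one hrz]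
    rw [Finset.sum_congr rfl this, Finset.sum_const, Nat.card_Icc]
    simp only [Nat.add_sub_cancel]
    rw [nsmul_eq_mul, mul_one, Nat.cast_sub hp1]
    simp [ZMod.natCast_self]
  · rw [if_neg hbr]
    rcases Nat.eq_zero_or_pos b with hb0 | hb0
    · subst hb0
      refine Finset.sum_eq_zero fun k hk => ?_
      rw [mem_Icc] at hk
      simp [zero_pow (by omega : k ≠ 0)]
    · have hxy : (b : ZMod p) ≠ (r : ZMod p) := by
        intro h
        apply hbr
        have := congrArg ZMod.val h
        rwa [ZMod.val_cast_of_lt hb, ZMod.val_cast_of_lt hr] at this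
      have hgeom := geom_sum₂_mul (b : ZMod p) (r : ZMod p) p
      rw [ZMod.pow_card, ZMod.pow_card] at hgeom
      have hsub : (b : ZMod p) - r ≠ 0 := sub_ne_zero.mpr hxy
      have hfull : ∑ i ∈ range p, (b:ZMod p)^i * (r:ZMod p)^(p-1-i) = 1 := by
        have := mul_right_cancel₀ hsub (hgeom.trans (one_mul ((b:ZMod p) - r)).symm)
        exact this
      rw [range_eq_Ico, Finset.sum_eq_sum_Ico_succ_bot (by omega : 0 < p)] at hfull
      simp only [pow_zero, one_mul, Nat.sub_zero] at hfull
      rw [ZMod.pow_card_sub_one_eq_one hrz] at hfull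
      have h2 : ∑ i ∈ Ico 1 p, (b:ZMod p)^i * (r:ZMod p)^(p-1-i) = 0 := by
        have := hfull
        rw [zero_add] at this
        linear_combination this
      rw [show Icc 1 (p-1) = Ico 1 p by rw [← Finset.Ico_add_one_right_eq_Icc]; congr 1; omega]
      rw [← h2]
      exact Finset.sum_congr rfl fun k _ => mul_comm _ _

lemma der_eq_desc (m : ℕ) :
    ((-1:ℤ))^m * numDerangements m
      = ∑ s ∈ range (m+1), (-1:ℤ)^s * (m.descFactorial s) := by
  rw [numDerangements_sum, Finset.mul_sum, ← Finset.sum_range_reflect]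
  refine Finset.sum_congr rfl fun s hs => ?_
  rw [mem_range] at hs
  have hsm : s ≤ m := by omega
  have h1 : m + 1 - 1 - s = m - s := by omega
  rw [h1]
  have h2 : m - (m - s) = s := by omega
  rw [h2]
  have h3 : (m - s + 1).ascFactorial s = m.descFactorial s := by
    rw [← Nat.add_descFactorial_eq_ascFactorial]
    congr 1
    omega
  rw [h3]
  have h4 : (-1:ℤ)^(m-s) = (-1)^m * (-1)^s := by
    have : (-1:ℤ)^(m-s) * (-1)^s = (-1)^m := by
      rw [← pow_add]
      congr 1
      omega
    have hsq : ((-1:ℤ)^s)*((-1:ℤ)^s) = 1 := by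
      rw [← pow_add, ← two_mul, pow_mul]
      norm_num
    calc (-1:ℤ)^(m-s) = (-1:ℤ)^(m-s) * (((-1:ℤ)^s)*((-1:ℤ)^s)) := by rw [hsq, mul_one]
      _ = (-1)^m * (-1)^s := by rw [← mul_assoc, this]
  rw [h4]
  ring_nf
  rw [mul_comm m 2, pow_mul]
  norm_num

lemma desc_sum_mod (p m : ℕ) [hp : Fact p.Prime] :
    (∑ s ∈ range (m+1), (-1:ZMod p)^s * (m.descFactorial s : ZMod p))
      = ∑ s ∈ range (m % p + 1), (-1:ZMod p)^s * ((m % p).descFactorial s : ZMod p) := by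
  have hu : m % p ≤ m := Nat.mod_le m p
  have hcast : ∀ s, s ≤ m → (m.descFactorial s : ZMod p) = ∏ i ∈ range s, ((m : ZMod p) - i) := by
    intro s hsm
    rw [Nat.descFactorial_eq_prod_range, Nat.cast_prod]
    refine Finset.prod_congr rfl fun i hi => ?_
    rw [mem_range] at hi
    rw [Nat.cast_sub (by omega)]
  have hmc : (m : ZMod p) = ((m % p : ℕ) : ZMod p) := (ZMod.natCast_mod m p).symm
  rw [← Finset.sum_subset (Finset.range_subset_range.mpr (by omega : m % p + 1 ≤ m + 1))]
  · refine Finset.sum_congr rfl fun s hs => ?_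
    rw [mem_range] at hs
    rw [hcast s (by omega), Nat.descFactorial_eq_prod_range, Nat.cast_prod]
    refine congrArg _ (Finset.prod_congr rfl fun i hi => ?_)
    rw [mem_range] at hi
    rw [Nat.cast_sub (by omega : i ≤ m % p), hmc]
  · intro s hs hns
    rw [mem_range] at hs
    rw [mem_range, not_lt] at hns
    rw [hcast s (by omega)]
    have : (m : ZMod p) - (m % p : ℕ) = 0 := by rw [hmc]; ring
    rw [Finset.prod_eq_zero (Finset.mem_range.mpr (by omega : m % p < s)) this]
    ring

theorem sun_zagier_n1 (m p : ℕ) (hm : 1 ≤ m) (hp : p.Prime) (hpm : ¬ p ∣ m) :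
    (∑ k ∈ Icc 1 (p - 1), (-(m : ℤ)) ^ (p - 1 - k) * bell (k + 1)) ≡
      (-1) ^ m * (numDerangements m : ℤ) [ZMOD p] := by
  haveI : Fact p.Prime := ⟨hp⟩
  have hp2 : 2 ≤ p := hp.two_le
  set u := m % p with hu_def
  have hu0 : u ≠ 0 := fun h => hpm (Nat.dvd_of_mod_eq_zero h)
  have hup : u < p := Nat.mod_lt m (by omega)
  set r := p - u with hr_def
  have hr0 : r ≠ 0 := by omega
  have hrp : r < p := by omega
  rw [← ZMod.intCast_eq_intCast_iff]
  push_cast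
  have hmr : (-(m : ZMod p)) = (r : ZMod p) := by
    rw [hr_def, Nat.cast_sub hup.le, ZMod.natCast_self, zero_sub, hu_def, ZMod.natCast_mod]
  rw [hmr]
  -- expand bell numbers and swap sums
  have hbell : ∀ k ∈ Icc 1 (p-1), (bell (k+1) : ZMod p)
      = ∑ j ∈ range (p+1), (stirling2 (k+1) j : ZMod p) := by
    intro k hk
    rw [mem_Icc] at hk
    rw [bell, Nat.cast_sum]
    rw [Finset.sum_subset (Finset.range_subset_range.mpr (by omega : k + 1 + 1 ≤ p + 1))]
    intro j hj hnj
    rw [mem_range, not_lt] at hnj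
    rw [stirling2_eq_zero (by omega : k + 1 < j), Nat.cast_zero]
  rw [Finset.sum_congr rfl fun k hk => by rw [hbell k hk, Finset.mul_sum]]
  rw [Finset.sum_comm]
  -- now : ∑ j ∈ range (p+1), W j  with W j = ∑ k, r^(p-1-k) * S(k+1,j)
  rw [Finset.sum_range_succ]
  -- last term j = p equals 1
  have hlast : ∑ k ∈ Icc 1 (p-1), ((r:ZMod p))^(p-1-k) * (stirling2 (k+1) p : ZMod p) = 1 := by
    rw [Finset.sum_eq_single_of_mem (p-1) (by rw [mem_Icc]; omega)]
    · rw [Nat.sub_self, pow_zero, one_mul,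
        show p - 1 + 1 = p by omega, stirling2_self, Nat.cast_one]
    · intro k hk hkne
      rw [mem_Icc] at hk
      rw [stirling2_eq_zero (by omega : k + 1 < p), Nat.cast_zero, mul_zero]
  rw [hlast]
  -- each middle term
  have hmid : ∀ j ∈ range p,
      (∑ k ∈ Icc 1 (p-1), ((r:ZMod p))^(p-1-k) * (stirling2 (k+1) j : ZMod p))
        = if r ≤ j then (-1:ZMod p)^(p-j) * ((u.descFactorial (p-j) : ℕ) : ZMod p) else 0 := by
    intro j hj
    rw [mem_range] at hj
    have hF : (j.factorial : ZMod p) ≠ 0 := by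
      rw [Ne, ZMod.natCast_eq_zero_iff]
      intro hdvd
      exact absurd (((Nat.Prime.dvd_factorial hp).mp hdvd)) (by omega)
    apply mul_left_cancel₀ hF
    have hIF : ∀ n', (j.factorial : ZMod p) * (stirling2 n' j : ZMod p)
        = ∑ i ∈ range (j+1), (-1:ZMod p)^i * (j.choose i : ZMod p) * ((j - i : ℕ) : ZMod p)^n' := by
      intro n'
      have h := congrArg (fun z : ℤ => (z : ZMod p)) (factorial_mul_stirling2 n' j)
      push_cast at h
      exact h
    rw [Finset.mul_sum]
    have step1 : ∀ k ∈ Icc 1 (p-1),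
        (j.factorial : ZMod p) * (((r:ZMod p))^(p-1-k) * (stirling2 (k+1) j : ZMod p))
        = ∑ i ∈ range (j+1), (-1:ZMod p)^i * (j.choose i : ZMod p) * ((j - i : ℕ) : ZMod p)
            * (((r:ZMod p))^(p-1-k) * ((j - i : ℕ) : ZMod p)^k) := by
      intro k hk
      rw [mul_left_comm, hIF (k+1), Finset.mul_sum]
      refine Finset.sum_congr rfl fun i _ => ?_
      rw [pow_succ']
      ring
    rw [Finset.sum_congr rfl step1, Finset.sum_comm]
    have step2 : ∀ i ∈ range (j+1),
        (∑ k ∈ Icc 1 (p-1), (-1:ZMod p)^i * (j.choose i : ZMod p) * ((j - i : ℕ) : ZMod p)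
            * (((r:ZMod p))^(p-1-k) * ((j - i : ℕ) : ZMod p)^k))
        = (-1:ZMod p)^i * (j.choose i : ZMod p) * ((j - i : ℕ) : ZMod p)
            * (if j - i = r then -1 else 0) := by
      intro i hi
      rw [← Finset.mul_sum, geom_aux p r (j-i) hr0 hrp (by omega : j - i < p)]
    rw [Finset.sum_congr rfl step2]
    by_cases hrj : r ≤ j
    · rw [if_pos hrj]
      rw [Finset.sum_eq_single_of_mem (j - r) (by rw [mem_range]; omega)]
      · rw [if_pos (by omega : j - (j - r) = r)]
        rw [show j - (j - r) = r by omega]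
        -- key arithmetic identity (★)
        set t := j - r with ht_def
        set s := p - j with hs_def
        have hts : t + r = j := by omega
        have hstu : s + t = u := by omega
        have hG : ((r-1).factorial : ZMod p) * (t.factorial : ZMod p) ≠ 0 := by
          have h1 : ((r-1).factorial : ZMod p) ≠ 0 := by
            rw [Ne, ZMod.natCast_eq_zero_iff]
            intro hdvd
            exact absurd ((Nat.Prime.dvd_factorial hp).mp hdvd) (by omega)
          have h2 : ((t.factorial : ZMod p)) ≠ 0 := by
            rw [Ne, ZMod.natCast_eq_zero_iff]
            intro hdvd
            exact absurd ((Nat.Prime.dvd_factorial hp).mp hdvd) (by omega)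
          exact mul_ne_zero h1 h2
        apply mul_left_cancel₀ hG
        -- LHS * G = (-1)^(t+1) * j!
        have hnat1 : (r-1).factorial * t.factorial * (j.choose t * r) = j.factorial := by
          have h := Nat.choose_mul_factorial_mul_factorial (show t ≤ j by omega)
          rw [show j - t = r by omega] at h
          calc (r-1).factorial * t.factorial * (j.choose t * r)
              = j.choose t * t.factorial * (r * (r-1).factorial) := by ring
            _ = j.choose t * t.factorial * r.factorial := by
                rw [Nat.mul_factorial_pred (by omega : r ≠ 0)]
            _ = j.factorial := h
        have hnat2 : u.descFactorial s * t.factorial = u.factorial := by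
          have := Nat.factorial_mul_descFactorial (show s ≤ u by omega)
          rw [show u - s = t by omega] at this
          rw [mul_comm]
          exact this
        have hwil : (u.factorial : ZMod p) * (((r-1).factorial : ℕ) : ZMod p) = (-1)^(u+1) := by
          have := wilson_aux p u (by omega)
          rwa [show p - 1 - u = r - 1 by omega] at this
        -- both sides
        have hL : ((r-1).factorial : ZMod p) * (t.factorial : ZMod p)
            * ((-1:ZMod p)^t * (j.choose t : ZMod p) * (r : ZMod p) * (-1))
            = (-1:ZMod p)^(t+1) * (j.factorial : ZMod p) := by
          have : (((r-1).factorial * t.factorial * (j.choose t * r) : ℕ) : ZMod p)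
              = (j.factorial : ZMod p) := by rw [hnat1]
          push_cast at this
          rw [pow_succ]
          linear_combination ((-1:ZMod p)^t * (-1)) * this
        have hR : ((r-1).factorial : ZMod p) * (t.factorial : ZMod p)
            * ((j.factorial : ZMod p) * ((-1:ZMod p)^s * ((u.descFactorial s : ℕ) : ZMod p)))
            = (-1:ZMod p)^(t+1) * (j.factorial : ZMod p) := by
          have hc2 : ((u.descFactorial s * t.factorial : ℕ) : ZMod p) = (u.factorial : ZMod p) := by
            rw [hnat2]
          push_cast at hc2
          have : ((r-1).factorial : ZMod p) * (t.factorial : ZMod p)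
              * ((j.factorial : ZMod p) * ((-1:ZMod p)^s * ((u.descFactorial s : ℕ) : ZMod p)))
              = (-1:ZMod p)^s * (j.factorial : ZMod p)
                * ((u.factorial : ZMod p) * (((r-1).factorial : ℕ) : ZMod p)) := by
            rw [← hc2]; push_cast; ring
          rw [this, hwil]
          rw [show (-1:ZMod p)^s * (j.factorial:ZMod p) * (-1)^(u+1)
              = (-1)^(s+(u+1)) * (j.factorial:ZMod p) by rw [pow_add]; ring]
          congr 1
          rw [show s + (u+1) = 2*s + (t+1) by omega, pow_add, pow_mul, neg_one_sq, one_pow, one_mul]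
        rw [hL, hR]
      · intro i hi hine
        rw [mem_range] at hi
        rw [if_neg (by omega : ¬ (j - i = r)), mul_zero]
    · rw [if_neg hrj, mul_zero]
      refine Finset.sum_eq_zero fun i hi => ?_
      rw [mem_range] at hi
      rw [if_neg (by omega : ¬ (j - i = r)), mul_zero]
  rw [Finset.sum_congr rfl hmid]
  -- sum over j of the if-expression
  have hsum_if : ∑ j ∈ range p, (if r ≤ j then (-1:ZMod p)^(p-j) * ((u.descFactorial (p-j) : ℕ) : ZMod p) else 0)
      = ∑ i ∈ range u, (-1:ZMod p)^(i+1) * ((u.descFactorial (i+1) : ℕ) : ZMod p) := by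
    rw [← Finset.sum_subset (show Ico r p ⊆ range p by rw [range_eq_Ico]; exact Finset.Ico_subset_Ico (by omega) le_rfl)]
    · refine Finset.sum_nbij' (fun j => p - j - 1) (fun i => p - i - 1) ?_ ?_ ?_ ?_ ?_
      · intro j hj; rw [mem_Ico] at hj
        show p - j - 1 ∈ range u
        rw [mem_range]; omega
      · intro i hi; rw [mem_range] at hi
        show p - i - 1 ∈ Ico r p
        rw [mem_Ico]; omega
      · intro j hj; rw [mem_Ico] at hj
        show p - (p - j - 1) - 1 = j
        omega
      · intro i hi; rw [mem_range] at hi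
        show p - (p - i - 1) - 1 = i
        omega
      · intro j hj
        rw [mem_Ico] at hj
        show (if r ≤ j then (-1:ZMod p)^(p-j) * ((u.descFactorial (p-j) : ℕ) : ZMod p) else 0)
          = (-1:ZMod p)^((p - j - 1)+1) * ((u.descFactorial ((p - j - 1)+1) : ℕ) : ZMod p)
        rw [if_pos hj.1, show p - j - 1 + 1 = p - j by omega]
    · intro j hj hnj
      rw [mem_Ico] at hnj
      rw [range_eq_Ico, mem_Ico] at hj
      rw [if_neg (by omega)]
  rw [hsum_if]
  -- right-hand side
  have hder : ((-1:ZMod p))^m * (numDerangements m : ZMod p)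
      = ∑ s ∈ range (u+1), (-1:ZMod p)^s * ((u.descFactorial s : ℕ) : ZMod p) := by
    have h := congrArg (fun z : ℤ => (z : ZMod p)) (der_eq_desc m)
    push_cast at h
    rw [h, desc_sum_mod p m]
  rw [hder]
  rw [Finset.sum_range_succ' (fun s => (-1:ZMod p)^s * ((u.descFactorial s : ℕ) : ZMod p)) u]
  simp [Nat.descFactorial]
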